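/- Explicit construction of a lifted parameter (narrow input case): Let NN have widths {m_l}_{l=0}^L, let q ∈ [L−1], and suppose m_q ≤ m_{q+1}. Let NN′ be one-layer deeper than NN at position q with inserted width m′_{q̂} = m_q. Let (a,b) be an affine subdomain of σ with constants λ ≠ 0, μ, and fix x_low < x_up with [x_low, x_up] ⊂ (a,b). Given a parameter θ of NN, set x_min = min_{i∈[n], j∈[m_q]} (f^[q]_θ(x_i))_j and x_max the corresponding maximum, and assume x_min ≠ x_max. Define ξ = (x_up − x_low)/(x_max − x_min), W′^[q̂] = ξ I, b′^[q̂] = (x_low − ξ x_min)1, W′^[q+1] = (1/(λξ)) W^[q+1], and b′^[q+1] = b^[q+1] − W′^[q+1](λ b′^[q̂] + μ 1), and let θ′ be the parameter of NN′ obtained from θ by inserting (W′^[q̂], b′^[q̂]) at layer q̂ and replacing layer q+1 by (W′^[q+1], b′^[q+1]). Then θ′ ∈ T_S(θ), i.e., θ′ satisfies the local-in-layer, layer linearization, and output preserving conditions. -/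

import Mathlib

/-!
Common formalization of fully-connected neural networks, one-layer deeper
networks, and the critical lifting operator from
"Embedding Principle in Depth for the Loss Landscape Analysis of Deep Neural Networks".

Vectors are modelled as functions `ℕ → ℝ` (coordinates beyond the layer width
are irrelevant and feature vectors are zero-padded there); parameters assign to
each layer index `l ≥ 1` a weight "matrix" `ℕ → ℕ → ℝ` and a bias `ℕ → ℝ`.
-/

/-- Parameters of a network: for each layer `l ≥ 1` a weight matrix and a bias. -/
abbrev NNParams : Type := ℕ → (ℕ → ℕ → ℝ) × (ℕ → ℝ)

/-- Feature vectors `f^[l]_θ(x)`: `f^[0]_θ(x) = x` (truncated to the input width),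
`f^[l]_θ(x) = σ(W^[l] f^[l-1]_θ(x) + b^[l])` for `1 ≤ l ≤ L-1`, and no activation
at the output layer `L`.  Coordinates outside the layer width are `0`. -/
noncomputable def feat (σ : ℝ → ℝ) (m : ℕ → ℕ) (L : ℕ) (θ : NNParams) (x : ℕ → ℝ) :
    ℕ → ℕ → ℝ
  | 0 => fun i => if i < m 0 then x i else 0
  | l + 1 => fun i =>
      if i < m (l + 1) then
        (if l + 1 = L then id else σ)
          ((∑ j ∈ Finset.range (m l), (θ (l + 1)).1 i j * feat σ m L θ x l j)
            + (θ (l + 1)).2 i)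
      else 0

/-- Output `f_θ(x) = W^[L] f^[L-1]_θ(x) + b^[L]` of the network. -/
noncomputable def nnOut (σ : ℝ → ℝ) (m : ℕ → ℕ) (L : ℕ) (θ : NNParams) (x : ℕ → ℝ) :
    ℕ → ℝ :=
  feat σ m L θ x L

/-- Pre-activation of layer `l ≥ 1`: `W^[l] f^[l-1]_θ(x) + b^[l]`. -/
noncomputable def preAct (σ : ℝ → ℝ) (m : ℕ → ℕ) (L : ℕ) (θ : NNParams) (x : ℕ → ℝ)
    (l i : ℕ) : ℝ :=
  (∑ j ∈ Finset.range (m (l - 1)), (θ l).1 i j * feat σ m L θ x (l - 1) j) + (θ l).2 i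

/-- `(a,b)` is an affine subdomain of `σ` with slope `lam ≠ 0` and intercept `mu`. -/
def AffineSubdomain (σ : ℝ → ℝ) (a b lam mu : ℝ) : Prop :=
  a < b ∧ lam ≠ 0 ∧ ∀ t ∈ Set.Ioo a b, σ t = lam * t + mu

/-- Widths of the one-layer deeper network obtained by inserting a hidden layer of
width `mh` between layers `q` and `q+1` (the inserted layer gets index `q+1` and
all later layers are shifted up by one). -/
def insertWidth (m : ℕ → ℕ) (q mh : ℕ) : ℕ → ℕ :=
  fun l => if l ≤ q then m l else if l = q + 1 then mh else m (l - 1)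

/-- Local-in-layer condition: all layers of the deeper network other than the inserted
layer (deep index `q+1`) and the following layer (deep index `q+2`) are inherited
from the shallow network. -/
def LocalInLayer (m : ℕ → ℕ) (L q : ℕ) (θ θ' : NNParams) : Prop :=
  (∀ l, 1 ≤ l → l ≤ q →
    (∀ i < m l, ∀ j < m (l - 1), (θ' l).1 i j = (θ l).1 i j) ∧
    (∀ i < m l, (θ' l).2 i = (θ l).2 i)) ∧
  (∀ l, q + 3 ≤ l → l ≤ L + 1 →
    (∀ i < m (l - 1), ∀ j < m (l - 2), (θ' l).1 i j = (θ (l - 1)).1 i j) ∧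
    (∀ i < m (l - 1), (θ' l).2 i = (θ (l - 1)).2 i))

/-- Output preserving condition:
`W'^[q+1] diag(λ) W'^[q̂] = W^[q+1]` and
`W'^[q+1] diag(λ) b'^[q̂] + W'^[q+1] μ + b'^[q+1] = b^[q+1]`
(in deep indexing, `W'^[q̂] = (θ' (q+1)).1` and `W'^[q+1] = (θ' (q+2)).1`). -/
def OutputPres (m : ℕ → ℕ) (q mh : ℕ) (θ θ' : NNParams) (lam mu : ℕ → ℝ) : Prop :=
  (∀ i < m (q + 1), ∀ k < m q,
    (∑ j ∈ Finset.range mh, (θ' (q + 2)).1 i j * (lam j * (θ' (q + 1)).1 j k))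
      = (θ (q + 1)).1 i k) ∧
  (∀ i < m (q + 1),
    (∑ j ∈ Finset.range mh, (θ' (q + 2)).1 i j * (lam j * (θ' (q + 1)).2 j + mu j))
      + (θ' (q + 2)).2 i = (θ (q + 1)).2 i)

/-- `θ'` is a one-layer lifting of `θ` with explicit slope/intercept vectors
`lam, mu` and affine subdomains `(aa j, bb j)`: the local-in-layer, layer
linearization and output preserving conditions. -/
def LiftWitness (σ : ℝ → ℝ) (m : ℕ → ℕ) (L q mh : ℕ) {n : ℕ}
    (S : Fin n → (ℕ → ℝ) × (ℕ → ℝ)) (θ θ' : NNParams) (lam mu aa bb : ℕ → ℝ) : Prop :=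
  LocalInLayer m L q θ θ' ∧
  (∀ j < mh, AffineSubdomain σ (aa j) (bb j) (lam j) (mu j) ∧
    ∀ i : Fin n,
      preAct σ (insertWidth m q mh) (L + 1) θ' (S i).1 (q + 1) j ∈ Set.Ioo (aa j) (bb j)) ∧
  OutputPres m q mh θ θ' lam mu

/-- The one-layer lifting operator `T_S(θ)`: the set of all parameters of the
one-layer deeper network satisfying the local-in-layer, layer linearization and
output preserving conditions. -/
def liftSet (σ : ℝ → ℝ) (m : ℕ → ℕ) (L q mh : ℕ) {n : ℕ}
    (S : Fin n → (ℕ → ℝ) × (ℕ → ℝ)) (θ : NNParams) : Set NNParams :=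
  { θ' | ∃ lam mu aa bb : ℕ → ℝ, LiftWitness σ m L q mh S θ θ' lam mu aa bb }

/-- Empirical risk `R_S(θ) = (1/n) ∑ᵢ ℓ(f_θ(xᵢ), yᵢ)`. -/
noncomputable def empRisk (σ : ℝ → ℝ) (ℓ : (ℕ → ℝ) → (ℕ → ℝ) → ℝ) (m : ℕ → ℕ) (L : ℕ)
    {n : ℕ} (S : Fin n → (ℕ → ℝ) × (ℕ → ℝ)) (θ : NNParams) : ℝ :=
  (1 / (n : ℝ)) * ∑ i : Fin n, ℓ (nnOut σ m L θ (S i).1) (S i).2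

/-- Update a single weight entry `W^[l]_{ij}` of the parameters. -/
def updW (θ : NNParams) (l i j : ℕ) (t : ℝ) : NNParams :=
  fun l' => if l' = l then
    ((fun i' j' => if i' = i ∧ j' = j then t else (θ l).1 i' j'), (θ l).2)
  else θ l'

/-- Update a single bias entry `b^[l]_i` of the parameters. -/
def updB (θ : NNParams) (l i : ℕ) (t : ℝ) : NNParams :=
  fun l' => if l' = l then
    ((θ l).1, fun i' => if i' = i then t else (θ l).2 i')
  else θ l'

/-- `θ` is a critical point of the empirical risk: all partial derivatives with
respect to the weight and bias entries of all layers vanish. -/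
def IsCriticalPt (σ : ℝ → ℝ) (ℓ : (ℕ → ℝ) → (ℕ → ℝ) → ℝ) (m : ℕ → ℕ) (L : ℕ)
    {n : ℕ} (S : Fin n → (ℕ → ℝ) × (ℕ → ℝ)) (θ : NNParams) : Prop :=
  ∀ l, 1 ≤ l → l ≤ L →
    (∀ i < m l, ∀ j < m (l - 1),
      deriv (fun t => empRisk σ ℓ m L S (updW θ l i j t)) ((θ l).1 i j) = 0) ∧
    (∀ i < m l,
      deriv (fun t => empRisk σ ℓ m L S (updB θ l i t)) ((θ l).2 i) = 0)

/-- Feature gradients `g^[l]_θ(x)`: `g^[L] = 1` and `g^[l] = σ'(W^[l] f^[l-1] + b^[l])`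
for `l ≤ L-1`; coordinates outside the layer width are `0`. -/
noncomputable def featGrad (σ : ℝ → ℝ) (m : ℕ → ℕ) (L : ℕ) (θ : NNParams) (x : ℕ → ℝ)
    (l i : ℕ) : ℝ :=
  if i < m l then (if l = L then 1 else deriv σ (preAct σ m L θ x l i)) else 0

/-- Auxiliary downward recursion for error vectors: `errVecAux … k = z^[L-k]`. -/
noncomputable def errVecAux (σ : ℝ → ℝ) (ℓ : (ℕ → ℝ) → (ℕ → ℝ) → ℝ) (m : ℕ → ℕ) (L : ℕ)
    (θ : NNParams) (x y : ℕ → ℝ) : ℕ → ℕ → ℝ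
  | 0 => fun i =>
      if i < m L then
        deriv (fun t => ℓ (Function.update (nnOut σ m L θ x) i t) y) (nnOut σ m L θ x i)
      else 0
  | k + 1 => fun i =>
      if i < m (L - (k + 1)) then
        ∑ p ∈ Finset.range (m (L - k)),
          (θ (L - k)).1 p i * (errVecAux σ ℓ m L θ x y k p * featGrad σ m L θ x (L - k) p)
      else 0

/-- Error vectors `z^[l]_θ(x)`: `z^[L] = ∇_f ℓ(f_θ(x), y)` and
`z^[l] = (W^[l+1])ᵀ (z^[l+1] ∘ g^[l+1])`. -/
noncomputable def errVec (σ : ℝ → ℝ) (ℓ : (ℕ → ℝ) → (ℕ → ℝ) → ℝ) (m : ℕ → ℕ) (L : ℕ)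
    (θ : NNParams) (x y : ℕ → ℝ) (l : ℕ) : ℕ → ℝ :=
  errVecAux σ ℓ m L θ x y (L - l)

/-- A list of insertion positions/widths `(q, mh)` describes a valid chain of
one-layer-deeper insertions starting from widths `m` and depth `L`. -/
def ValidChain (m : ℕ → ℕ) (L : ℕ) : List (ℕ × ℕ) → Prop
  | [] => True
  | (q, mh) :: rest =>
      1 ≤ q ∧ q + 1 ≤ L ∧ min (m q) (m (q + 1)) ≤ mh ∧
        ValidChain (insertWidth m q mh) (L + 1) rest

/-- The widths obtained after performing a chain of insertions. -/
def chainWidths (m : ℕ → ℕ) : List (ℕ × ℕ) → (ℕ → ℕ)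
  | [] => m
  | (q, mh) :: rest => chainWidths (insertWidth m q mh) rest

/-- Multi-layer lifting: the composition of the one-layer liftings along a chain of
insertions. -/
def liftChain (σ : ℝ → ℝ) {n : ℕ} (S : Fin n → (ℕ → ℝ) × (ℕ → ℝ)) :
    (ℕ → ℕ) → ℕ → List (ℕ × ℕ) → NNParams → Set NNParams
  | _, _, [], θ => {θ}
  | m, L, (q, mh) :: rest, θ =>
      {θ'' | ∃ θ', θ' ∈ liftSet σ m L q mh S θ ∧
        θ'' ∈ liftChain σ S (insertWidth m q mh) (L + 1) rest θ'}

/-- `NN'` (widths `m'`, depth `L + J`) is `J`-layer deeper than `NN` (widths `m`,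
depth `L`): it is obtained by `J` successive one-layer insertions, each inserted
layer having width at least the minimum of the widths of its neighboring layers. -/
def JDeeper : ℕ → (ℕ → ℕ) → ℕ → (ℕ → ℕ) → Prop
  | 0, m, L, m' => ∀ l ≤ L, m' l = m l
  | J + 1, m, L, m' =>
      ∃ mmid, JDeeper J m L mmid ∧
        ∃ q mh, 1 ≤ q ∧ q + 1 ≤ L + J ∧ min (mmid q) (mmid (q + 1)) ≤ mh ∧
          ∀ l ≤ L + J + 1, m' l = insertWidth mmid q mh l

/-- Features agree through layer `q` when widths and parameters agree there. -/
lemma feat_eq_of_agree (σ : ℝ → ℝ) (m m' : ℕ → ℕ) (L L' q : ℕ)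
    (θ θ' : NNParams) (x : ℕ → ℝ)
    (hm : ∀ l ≤ q, m' l = m l)
    (hθ : ∀ l, 1 ≤ l → l ≤ q → θ' l = θ l)
    (hqL : q < L) (hqL' : q < L') :
    ∀ l ≤ q, feat σ m' L' θ' x l = feat σ m L θ x l := by
  intro l
  induction l with
  | zero =>
    intro _
    funext i
    simp [feat, hm 0 (Nat.zero_le _)]
  | succ l ih =>
    intro hl
    have hl' : l ≤ q := Nat.le_of_succ_le hl
    funext i
    have h1 : l + 1 ≠ L' := by omega
    have h2 : l + 1 ≠ L := by omega
    simp only [feat, hm (l + 1) hl, hm l hl', if_neg h1, if_neg h2,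
      hθ (l + 1) (Nat.succ_le_succ (Nat.zero_le _)) hl, ih hl']

/-- **Explicit construction of a lifted parameter (narrow input case,
`m q ≤ m (q+1)`, inserted width `mh = m q`).**  With
`ξ = (x_up - x_low)/(x_max - x_min)`, `W'^[q̂] = ξ I`,
`b'^[q̂] = (x_low - ξ x_min) 1`, `W'^[q+1] = (1/(λξ)) W^[q+1]` and
`b'^[q+1] = b^[q+1] - W'^[q+1] (λ b'^[q̂] + μ 1)`, the resulting parameter lies in
`T_S(θ)`. -/
theorem explicit_lifting_narrow_input
    (σ : ℝ → ℝ) (m : ℕ → ℕ) (L q : ℕ)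
    (hq : 1 ≤ q) (hqL : q + 1 ≤ L)
    (hw : m q ≤ m (q + 1))
    (a b lam mu : ℝ) (hσ : AffineSubdomain σ a b lam mu)
    (xlow xup : ℝ) (hal : a < xlow) (hlu : xlow < xup) (hub : xup < b)
    {n : ℕ} (S : Fin n → (ℕ → ℝ) × (ℕ → ℝ)) (θ : NNParams)
    (xmin xmax : ℝ)
    (hmin : IsLeast
      {v : ℝ | ∃ i : Fin n, ∃ j < m q, v = feat σ m L θ (S i).1 q j} xmin)
    (hmax : IsGreatest
      {v : ℝ | ∃ i : Fin n, ∃ j < m q, v = feat σ m L θ (S i).1 q j} xmax)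
    (hne : xmin ≠ xmax) :
    (fun l =>
      if l = q + 1 then
        ((fun i j => if i = j then (xup - xlow) / (xmax - xmin) else 0),
         (fun _ => xlow - (xup - xlow) / (xmax - xmin) * xmin))
      else if l = q + 2 then
        ((fun i j => 1 / (lam * ((xup - xlow) / (xmax - xmin))) * (θ (q + 1)).1 i j),
         (fun i => (θ (q + 1)).2 i
            - (∑ j ∈ Finset.range (m q),
                1 / (lam * ((xup - xlow) / (xmax - xmin))) * (θ (q + 1)).1 i j)
              * (lam * (xlow - (xup - xlow) / (xmax - xmin) * xmin) + mu)))
      else if l ≤ q then θ l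
      else θ (l - 1) : NNParams)
      ∈ liftSet σ m L q (m q) S θ := by
  obtain ⟨hab, hlam, hσaff⟩ := hσ
  have hxle : xmin ≤ xmax := hmin.2 hmax.1
  have hxlt : xmin < xmax := lt_of_le_of_ne hxle hne
  have hxd : (0:ℝ) < xmax - xmin := by linarith
  set ξ : ℝ := (xup - xlow) / (xmax - xmin) with hξdef
  have hξpos : 0 < ξ := div_pos (by linarith) hxd
  have hξne : ξ ≠ 0 := ne_of_gt hξpos
  have hξmul : ξ * (xmax - xmin) = xup - xlow := div_mul_cancel₀ _ (ne_of_gt hxd)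
  set θ' : NNParams := (fun l =>
      if l = q + 1 then
        ((fun i j => if i = j then ξ else 0),
         (fun _ => xlow - ξ * xmin))
      else if l = q + 2 then
        ((fun i j => 1 / (lam * ξ) * (θ (q + 1)).1 i j),
         (fun i => (θ (q + 1)).2 i
            - (∑ j ∈ Finset.range (m q), 1 / (lam * ξ) * (θ (q + 1)).1 i j)
              * (lam * (xlow - ξ * xmin) + mu)))
      else if l ≤ q then θ l
      else θ (l - 1)) with hθ'def
  have hθ'q1 : θ' (q + 1) = ((fun i j => if i = j then ξ else 0),
      (fun _ => xlow - ξ * xmin)) := by simp [hθ'def]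
  have hθ'q2 : θ' (q + 2) = ((fun i j => 1 / (lam * ξ) * (θ (q + 1)).1 i j),
      (fun i => (θ (q + 1)).2 i
        - (∑ j ∈ Finset.range (m q), 1 / (lam * ξ) * (θ (q + 1)).1 i j)
          * (lam * (xlow - ξ * xmin) + mu))) := by
    simp [hθ'def]
  have hθ'low : ∀ l, 1 ≤ l → l ≤ q → θ' l = θ l := by
    intro l h1 h2
    have : l ≠ q + 1 := by omega
    have : l ≠ q + 2 := by omega
    simp_all [hθ'def]
  have hθ'high : ∀ l, q + 3 ≤ l → θ' l = θ (l - 1) := by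
    intro l h1
    have h2 : l ≠ q + 1 := by omega
    have h3 : l ≠ q + 2 := by omega
    have h4 : ¬ l ≤ q := by omega
    simp [hθ'def, h2, h3, h4]
  have hmw : ∀ l ≤ q, insertWidth m q (m q) l = m l := by
    intro l hl; simp [insertWidth, hl]
  have hfeat : ∀ x : ℕ → ℝ, ∀ l ≤ q,
      feat σ (insertWidth m q (m q)) (L + 1) θ' x l = feat σ m L θ x l := by
    intro x
    exact feat_eq_of_agree σ m (insertWidth m q (m q)) L (L + 1) q θ θ' x hmw hθ'low
      (by omega) (by omega)
  have hLIL : LocalInLayer m L q θ θ' := by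
    constructor
    · intro l h1 h2
      rw [hθ'low l h1 h2]
      exact ⟨fun _ _ _ _ => rfl, fun _ _ => rfl⟩
    · intro l h1 h2
      rw [hθ'high l h1]
      exact ⟨fun _ _ _ _ => rfl, fun _ _ => rfl⟩
  have hLin : ∀ j < m q, AffineSubdomain σ a b lam mu ∧
      ∀ i : Fin n, preAct σ (insertWidth m q (m q)) (L + 1) θ' (S i).1 (q + 1) j
        ∈ Set.Ioo a b := by
    intro j hj
    refine ⟨⟨hab, hlam, hσaff⟩, ?_⟩
    intro i
    have hq1 : q + 1 - 1 = q := rfl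
    have hmwq : insertWidth m q (m q) q = m q := hmw q le_rfl
    rw [Set.mem_Ioo]
    have hsum : preAct σ (insertWidth m q (m q)) (L + 1) θ' (S i).1 (q + 1) j
        = ξ * feat σ m L θ (S i).1 q j + (xlow - ξ * xmin) := by
      rw [preAct, hq1, hmwq, hfeat (S i).1 q le_rfl, hθ'q1]
      have : ∀ k ∈ Finset.range (m q),
          (if j = k then ξ else 0) * feat σ m L θ (S i).1 q k
            = if k = j then ξ * feat σ m L θ (S i).1 q j else 0 := by
        intro k _
        by_cases h : k = j
        · simp [h]
        · have h' : j ≠ k := fun hh => h hh.symm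
          simp [h, h']
      rw [Finset.sum_congr rfl this, Finset.sum_ite_eq' _ j,
        if_pos (Finset.mem_range.mpr hj)]
    rw [hsum]
    have hmem : feat σ m L θ (S i).1 q j ∈
        {v : ℝ | ∃ i : Fin n, ∃ j < m q, v = feat σ m L θ (S i).1 q j} :=
      ⟨i, j, hj, rfl⟩
    have hlo : xmin ≤ feat σ m L θ (S i).1 q j := hmin.2 hmem
    have hhi : feat σ m L θ (S i).1 q j ≤ xmax := hmax.2 hmem
    constructor
    · nlinarith [mul_nonneg (le_of_lt hξpos) (sub_nonneg.mpr hlo)]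
    · nlinarith [mul_le_mul_of_nonneg_left (sub_le_sub_right hhi xmin)
        (le_of_lt hξpos)]
  have hOP : OutputPres m q (m q) θ θ' (fun _ => lam) (fun _ => mu) := by
    have hlξ : lam * ξ ≠ 0 := mul_ne_zero hlam hξne
    constructor
    · intro i _ k hk
      rw [hθ'q1, hθ'q2]
      have : ∀ jj ∈ Finset.range (m q),
          1 / (lam * ξ) * (θ (q + 1)).1 i jj * (lam * if jj = k then ξ else 0)
            = if jj = k then (θ (q + 1)).1 i k else 0 := by
        intro jj _
        by_cases h : jj = k
        · subst h
          rw [if_pos rfl]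
          field_simp
          simp
        · simp [h]
      rw [Finset.sum_congr rfl this, Finset.sum_ite_eq' _ k,
        if_pos (Finset.mem_range.mpr hk)]
    · intro i _
      rw [hθ'q1, hθ'q2]
      simp only
      rw [← Finset.sum_mul]
      ring
  exact ⟨fun _ => lam, fun _ => mu, fun _ => a, fun _ => b, hLIL, fun j hj => hLin j hj, hOP⟩
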